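/- Let R be a commutative local noetherian ring with maximal ideal 𝔪 and completion R̂, and let S be a module-finite R-algebra. If I and J are idempotent two-sided ideals of S with I ⊗_R R̂ ≅ J ⊗_R R̂ as right S ⊗_R R̂-modules, then I = J. -/

import Mathlib

universe u

open scoped TensorProduct Pointwise

set_option maxHeartbeats 800000

section Aux1

lemma aux_hom_range {T : Type u} [Ring T] (K : Ideal T)
    (hK2 : ∀ a ∈ K, ∀ t : T, a * t ∈ K)
    (hKi : Submodule.span T ((K : Set T) * (K : Set T)) = K)
    (ψ : K →ₗ[T] T) (x : K) : ψ x ∈ K := by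
  obtain ⟨x, hx⟩ := x
  rw [← hKi] at hx
  induction hx using Submodule.span_induction with
  | mem a ha =>
      obtain ⟨u, hu, v, hv, rfl⟩ := ha
      have h1 : (⟨u * v, ‹_›⟩ : K) = u • ⟨v, hv⟩ := by ext; simp [smul_eq_mul]
      rw [h1, map_smul, smul_eq_mul]
      exact hK2 u hu _
  | zero =>
      show ψ 0 ∈ K
      simp
  | add a b ha hb iha ihb =>
      show ψ (⟨a, hKi ▸ ha⟩ + ⟨b, hKi ▸ hb⟩) ∈ K
      rw [map_add]
      exact K.add_mem (iha _) (ihb _)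
  | smul t a ha iha =>
      show ψ (t • (⟨a, hKi ▸ ha⟩ : K)) ∈ K
      rw [map_smul, smul_eq_mul]
      exact K.smul_mem t (iha _)

end Aux1

section Aux2

variable {R : Type u} [CommRing R] {S : Type u} [Ring S] [Algebra R S]
  {B : Type u} [CommRing B] [Algebra R B]

/-- The extension of a two-sided ideal is closed under right multiplication. -/
lemma aux_ext_two_sided (I : Ideal S) (hI2 : ∀ a ∈ I, ∀ s : S, a * s ∈ I) :
    ∀ a ∈ Ideal.span ((Algebra.TensorProduct.includeLeft : S →ₐ[R] S ⊗[R] B) '' (I : Set S)),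
      ∀ t : S ⊗[R] B, a * t ∈
        Ideal.span ((Algebra.TensorProduct.includeLeft : S →ₐ[R] S ⊗[R] B) '' (I : Set S)) := by
  set f : S →ₐ[R] S ⊗[R] B := Algebra.TensorProduct.includeLeft
  intro a ha
  induction ha using Submodule.span_induction with
  | mem c hc =>
      obtain ⟨y, hy, rfl⟩ := hc
      intro t
      induction t using TensorProduct.induction_on with
      | zero => simpa using Submodule.zero_mem _
      | tmul s r =>
          have h1 : f y * (s ⊗ₜ[R] r) = ((1 : S) ⊗ₜ[R] r) • f (y * s) := by
            simp only [f, Algebra.TensorProduct.includeLeft_apply, smul_eq_mul,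
              Algebra.TensorProduct.tmul_mul_tmul, one_mul, mul_one]
          rw [h1]
          exact Submodule.smul_mem _ _
            (Submodule.subset_span (Set.mem_image_of_mem _ (hI2 y hy s)))
      | add u v ihu ihv =>
          rw [mul_add]
          exact Submodule.add_mem _ ihu ihv
  | zero => intro t; simpa using Submodule.zero_mem _
  | add u v hu hv ihu ihv =>
      intro t
      rw [add_mul]
      exact Submodule.add_mem _ (ihu t) (ihv t)
  | smul c u hu ihu =>
      intro t
      rw [smul_eq_mul, mul_assoc, ← smul_eq_mul]
      exact Submodule.smul_mem _ _ (ihu t)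

/-- The extension of an idempotent ideal is idempotent. -/
lemma aux_ext_idem (I : Ideal S) (hI2 : ∀ a ∈ I, ∀ s : S, a * s ∈ I)
    (hIi : Submodule.span S ((I : Set S) * (I : Set S)) = I) :
    Submodule.span (S ⊗[R] B)
      (((Ideal.span ((Algebra.TensorProduct.includeLeft : S →ₐ[R] S ⊗[R] B) '' (I : Set S)) :
          Ideal (S ⊗[R] B)) : Set (S ⊗[R] B)) *
        ((Ideal.span ((Algebra.TensorProduct.includeLeft : S →ₐ[R] S ⊗[R] B) '' (I : Set S)) :
          Ideal (S ⊗[R] B)) : Set (S ⊗[R] B))) =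
      Ideal.span ((Algebra.TensorProduct.includeLeft : S →ₐ[R] S ⊗[R] B) '' (I : Set S)) := by
  set f : S →ₐ[R] S ⊗[R] B := Algebra.TensorProduct.includeLeft
  set K : Ideal (S ⊗[R] B) := Ideal.span (f '' I) with hK
  apply le_antisymm
  · rw [Submodule.span_le]
    rintro _ ⟨u, hu, v, hv, rfl⟩
    exact aux_ext_two_sided I hI2 u hu v
  · rw [Ideal.span_le]
    rintro _ ⟨y, hy, rfl⟩
    -- y ∈ I = span S (I * I)
    rw [← hIi] at hy
    induction hy using Submodule.span_induction with
    | mem c hc =>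
        obtain ⟨u, hu, v, hv, rfl⟩ := hc
        have h1 : f (u * v) = f u * f v := map_mul f u v
        rw [h1]
        exact Submodule.subset_span
          (Set.mul_mem_mul (Submodule.subset_span (Set.mem_image_of_mem _ hu))
            (Submodule.subset_span (Set.mem_image_of_mem _ hv)))
    | zero => simpa using Submodule.zero_mem _
    | add u v hu hv ihu ihv =>
        rw [map_add]
        exact Submodule.add_mem _ ihu ihv
    | smul s u hu ihu =>
        have h1 : f (s • u) = f s • f u := by
          simp [smul_eq_mul, map_mul]
        rw [h1]
        exact Submodule.smul_mem _ _ ihu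

end Aux2

section Aux3

variable (R : Type u) [CommRing R] [IsLocalRing R] [IsNoetherianRing R]

local notation "m" => IsLocalRing.maximalIdeal R
local notation "Rh" => AdicCompletion (IsLocalRing.maximalIdeal R) R

/-- Over a noetherian local ring, `x ⊗ 1 = 0` in `M ⊗ R̂` implies `x = 0` for finite `M`. -/
lemma aux_tmul_one_eq_zero {M : Type u} [AddCommGroup M] [Module R M] [Module.Finite R M]
    (x : M) (hx : x ⊗ₜ[R] (1 : Rh) = (0 : M ⊗[R] Rh)) : x = 0 := by
  have h1 : (1 : Rh) ⊗ₜ[R] x = (0 : Rh ⊗[R] M) := by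
    have := congrArg (TensorProduct.comm R M Rh) hx
    simpa using this
  have h2 : AdicCompletion.of m M x = 0 := by
    have h3 : AdicCompletion.ofTensorProduct m M ((1 : Rh) ⊗ₜ[R] x) =
        AdicCompletion.of m M x := by
      rw [AdicCompletion.ofTensorProduct_tmul, one_smul]
    rw [← h3, h1, map_zero]
  have h3 : x ∈ (⨅ n : ℕ, (m ^ n • ⊤ : Submodule R M)) := by
    rw [Submodule.mem_iInf]
    intro n
    have h4 : AdicCompletion.eval m M n (AdicCompletion.of m M x) = 0 := by
      rw [h2, map_zero]
    rw [AdicCompletion.eval_of] at h4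
    rwa [Submodule.mkQ_apply, Submodule.Quotient.mk_eq_zero] at h4
  have h4 := Ideal.iInf_pow_smul_eq_bot_of_isLocalRing (I := m) (M := M)
    (IsLocalRing.maximalIdeal.isMaximal R).ne_top
  rw [h4, Submodule.mem_bot] at h3
  exact h3

/-- Faithfully flat descent: membership in the extended ideal descends. -/
lemma aux_comap (S : Type u) [Ring S] [Algebra R S] [Module.Finite R S] (I : Ideal S)
    (x : S)
    (hx : (Algebra.TensorProduct.includeLeft : S →ₐ[R] S ⊗[R] Rh) x ∈
      Ideal.span ((Algebra.TensorProduct.includeLeft : S →ₐ[R] S ⊗[R] Rh) '' (I : Set S))) :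
    x ∈ I := by
  set f : S →ₐ[R] S ⊗[R] Rh := Algebra.TensorProduct.includeLeft
  let q : S →ₗ[R] S ⧸ I := (I.mkQ).restrictScalars R
  have key : ∀ t ∈ Ideal.span (f '' (I : Set S)), LinearMap.rTensor Rh q t = 0 := by
    intro t ht
    induction ht using Submodule.span_induction with
    | mem c hc =>
        obtain ⟨y, hy, rfl⟩ := hc
        have : q y = 0 := by
          simp only [q, LinearMap.coe_restrictScalars, Submodule.mkQ_apply,
            Submodule.Quotient.mk_eq_zero]
          exact hy
        simp [f, Algebra.TensorProduct.includeLeft_apply, LinearMap.rTensor_tmul, this]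
    | zero => simp
    | add u v hu hv ihu ihv => rw [map_add, ihu, ihv, add_zero]
    | smul s u hu ihu =>
        rw [smul_eq_mul]
        induction s using TensorProduct.induction_on with
        | zero => rw [zero_mul, map_zero]
        | tmul s₀ r =>
            have hcomm : (LinearMap.rTensor (R := R) Rh q).comp
                (LinearMap.mulLeft R (s₀ ⊗ₜ[R] r)) =
                (TensorProduct.map
                  (DistribMulAction.toLinearMap R (S ⧸ I) s₀)
                  (LinearMap.mulLeft R r)).comp (LinearMap.rTensor Rh q) := by
              apply TensorProduct.ext'
              intro a b
              simp only [LinearMap.comp_apply, LinearMap.mulLeft_apply,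
                Algebra.TensorProduct.tmul_mul_tmul, LinearMap.rTensor_tmul,
                TensorProduct.map_tmul, DistribSMul.toLinearMap_apply]
              have hq : q (s₀ * a) = s₀ • q a := by
                simp only [q, LinearMap.coe_restrictScalars, Submodule.mkQ_apply,
                  ← smul_eq_mul, Submodule.Quotient.mk_smul]
              rw [hq]
              rfl
            have := LinearMap.congr_fun hcomm u
            simp only [LinearMap.comp_apply, LinearMap.mulLeft_apply] at this
            rw [this, ihu, map_zero]
        | add u₁ u₂ ih₁ ih₂ => rw [add_mul, map_add, ih₁, ih₂, add_zero]
  have h0 : LinearMap.rTensor Rh q (f x) = 0 := key _ hx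
  have h1 : (q x) ⊗ₜ[R] (1 : Rh) = (0 : (S ⧸ I) ⊗[R] Rh) := by
    simpa [f, Algebra.TensorProduct.includeLeft_apply, LinearMap.rTensor_tmul] using h0
  have : Module.Finite R (S ⧸ I) :=
    Module.Finite.of_surjective q (fun y => Quotient.inductionOn' y (fun a => ⟨a, rfl⟩))
  have h2 : q x = 0 := aux_tmul_one_eq_zero R (q x) h1
  rwa [LinearMap.coe_restrictScalars, Submodule.mkQ_apply,
    Submodule.Quotient.mk_eq_zero] at h2 

end Aux3

/-- For a module-finite algebra `S` over a local noetherian ring `R`, idempotent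
two-sided ideals `I`, `J` of `S` whose extensions to `Ŝ = S ⊗_R R̂` are isomorphic as
`Ŝ`-modules are equal. -/
theorem stmt12 (R : Type u) [CommRing R] [IsLocalRing R] [IsNoetherianRing R]
    (S : Type u) [Ring S] [Algebra R S] [Module.Finite R S]
    (I J : Ideal S)
    (hI2 : ∀ a ∈ I, ∀ s : S, a * s ∈ I) (hJ2 : ∀ a ∈ J, ∀ s : S, a * s ∈ J)
    (hIi : Submodule.span S ((I : Set S) * (I : Set S)) = I)
    (hJi : Submodule.span S ((J : Set S) * (J : Set S)) = J)
    (h : Nonempty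
      (↥(Ideal.span ((Algebra.TensorProduct.includeLeft :
            S →ₐ[R] S ⊗[R] AdicCompletion (IsLocalRing.maximalIdeal R) R) '' (I : Set S)))
        ≃ₗ[S ⊗[R] AdicCompletion (IsLocalRing.maximalIdeal R) R]
        ↥(Ideal.span ((Algebra.TensorProduct.includeLeft :
            S →ₐ[R] S ⊗[R] AdicCompletion (IsLocalRing.maximalIdeal R) R) '' (J : Set S))))) :
    I = J := by
  obtain ⟨φ⟩ := h
  set f : S →ₐ[R] S ⊗[R] AdicCompletion (IsLocalRing.maximalIdeal R) R :=
    Algebra.TensorProduct.includeLeft with hf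
  set Ih := Ideal.span (f '' (I : Set S)) with hIh
  set Jh := Ideal.span (f '' (J : Set S)) with hJh
  have hIh2 := aux_ext_two_sided (R := R) (B := AdicCompletion (IsLocalRing.maximalIdeal R) R) I hI2
  have hJh2 := aux_ext_two_sided (R := R) (B := AdicCompletion (IsLocalRing.maximalIdeal R) R) J hJ2
  have hIhi := aux_ext_idem (R := R) (B := AdicCompletion (IsLocalRing.maximalIdeal R) R) I hI2 hIi
  have hJhi := aux_ext_idem (R := R) (B := AdicCompletion (IsLocalRing.maximalIdeal R) R) J hJ2 hJi
  have hJI : Jh ≤ Ih := by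
    intro y hy
    have h1 := aux_hom_range Ih hIh2 hIhi (Jh.subtype.comp φ.toLinearMap) (φ.symm ⟨y, hy⟩)
    simpa using h1
  have hIJ : Ih ≤ Jh := by
    intro y hy
    have h1 := aux_hom_range Jh hJh2 hJhi (Ih.subtype.comp φ.symm.toLinearMap) (φ ⟨y, hy⟩)
    simpa using h1
  ext x
  constructor
  · intro hx
    exact aux_comap R S J x (hIJ (Submodule.subset_span (Set.mem_image_of_mem _ hx)))
  · intro hx
    exact aux_comap R S I x (hJI (Submodule.subset_span (Set.mem_image_of_mem _ hx)))
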